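/- Let Δ, m, k, t be positive integers and let 𝓖 = {G_1,…,G_t} be a family of graphs on the same vertex set V(𝓖) satisfying (1) |Γ_𝓖(X)| ≥ Δ|X| + 1 for all X ⊆ V(𝓖) × [t] with 1 ≤ |X| ≤ m, and (2) |Γ_𝓖(X)| ≥ Δ|X| + k for all X ⊆ V(𝓖) × [t] with m < |X| ≤ 2m. Let H be a graph with |V(H)| ≤ k − 1, let f : E(H) → [t] be an edge-coloring such that the [t]-colored graph 𝓗 = (H,f) satisfies Δ_r(𝓗) ≤ Δ for every r ∈ [t], and let φ be a 2m-good embedding of 𝓗 into 𝓖. Let H_* be a graph obtained from H by adding a new vertex of degree 1, and let f_* : E(H_*) → [t] be an edge-coloring agreeing with f on E(H) such that 𝓗_* = (H_*, f_*) satisfies Δ_r(𝓗_*) ≤ Δ for each r ∈ [t]. Then there is a 2m-good embedding φ_* of 𝓗_* into 𝓖 that extends φ. -/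

import Mathlib

/-- The colorful neighborhood `Γ_𝓖(X) = ⋃_{(v,r) ∈ X} Γ_{G_r}(v)`. -/
def famNbhd {V : Type*} [Fintype V] [DecidableEq V] {t : ℕ} (G : Fin t → SimpleGraph V)
    [∀ i, DecidableRel (G i).Adj] (X : Finset (V × Fin t)) : Finset V :=
  X.biUnion fun p => (G p.2).neighborFinset p.1

/-- The `r`-degree of the `φ`-preimage of `v` in the `[t]`-colored graph `(H, f)`;
this is `0` when `v` is not in the image of `φ`. -/
noncomputable def preDeg {V W : Type*} (H : SimpleGraph W) {t : ℕ} (f : Sym2 W → Fin t)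
    (φ : W → V) (r : Fin t) (v : V) : ℕ :=
  {u : W | ∃ w, φ w = v ∧ H.Adj w u ∧ f s(w, u) = r}.ncard

/-- The quantity `R(X, φ) = |Γ_𝓖(X) \ φ(V(H))| − Σ_{(v,r) ∈ X} (Δ − D_{𝓗,r}(φ⁻¹(v)))`. -/
noncomputable def Rval {V W : Type*} [Fintype V] [DecidableEq V] [Fintype W] {t : ℕ}
    (G : Fin t → SimpleGraph V) [∀ i, DecidableRel (G i).Adj]
    (H : SimpleGraph W) (f : Sym2 W → Fin t) (Δ : ℕ) (φ : W → V)
    (X : Finset (V × Fin t)) : ℤ :=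
  ((famNbhd G X \ Finset.image φ Finset.univ).card : ℤ)
    - ∑ p ∈ X, ((Δ : ℤ) - (preDeg H f φ p.2 p.1 : ℤ))

/-- `φ` is an embedding of the `[t]`-colored graph `(H, f)` into the family `G`. -/
def IsColEmb {V W : Type*} {t : ℕ} (G : Fin t → SimpleGraph V)
    (H : SimpleGraph W) (f : Sym2 W → Fin t) (φ : W → V) : Prop :=
  Function.Injective φ ∧ ∀ u v : W, H.Adj u v → (G (f s(u, v))).Adj (φ u) (φ v)

/-- `φ` is an `s`-good embedding: `R(X, φ) ≥ 0` for every `X` with `|X| ≤ s`. -/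
noncomputable def IsGood {V W : Type*} [Fintype V] [DecidableEq V] [Fintype W] {t : ℕ}
    (G : Fin t → SimpleGraph V) [∀ i, DecidableRel (G i).Adj]
    (H : SimpleGraph W) (f : Sym2 W → Fin t) (Δ : ℕ) (φ : W → V) (s : ℕ) : Prop :=
  ∀ X : Finset (V × Fin t), X.card ≤ s → 0 ≤ Rval G H f Δ φ X

section Aux

lemma famNbhd_union {V : Type*} [Fintype V] [DecidableEq V] {t : ℕ}
    (G : Fin t → SimpleGraph V) [∀ i, DecidableRel (G i).Adj]
    (X Y : Finset (V × Fin t)) :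
    famNbhd G (X ∪ Y) = famNbhd G X ∪ famNbhd G Y := by
  ext v
  simp only [famNbhd, Finset.mem_biUnion, Finset.mem_union]
  constructor
  · rintro ⟨p, hp | hp, hv⟩
    · exact Or.inl ⟨p, hp, hv⟩
    · exact Or.inr ⟨p, hp, hv⟩
  · rintro (⟨p, hp, hv⟩ | ⟨p, hp, hv⟩)
    · exact ⟨p, Or.inl hp, hv⟩
    · exact ⟨p, Or.inr hp, hv⟩

lemma famNbhd_mono {V : Type*} [Fintype V] [DecidableEq V] {t : ℕ}
    (G : Fin t → SimpleGraph V) [∀ i, DecidableRel (G i).Adj]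
    {X Y : Finset (V × Fin t)} (h : X ⊆ Y) :
    famNbhd G X ⊆ famNbhd G Y :=
  Finset.biUnion_subset_biUnion_of_subset_left _ h

lemma preDeg_eq_of_injective {V W : Type*} (H : SimpleGraph W) {t : ℕ} (f : Sym2 W → Fin t)
    {φ : W → V} (hinj : Function.Injective φ) (r : Fin t) (w : W) :
    preDeg H f φ r (φ w) = {u : W | H.Adj w u ∧ f s(w, u) = r}.ncard := by
  unfold preDeg
  congr 1
  ext u
  simp only [Set.mem_setOf_eq]
  constructor
  · rintro ⟨w', hw', h1, h2⟩
    cases hinj hw'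
    exact ⟨h1, h2⟩
  · intro h
    exact ⟨w, rfl, h.1, h.2⟩

lemma preDeg_eq_zero {V W : Type*} (H : SimpleGraph W) {t : ℕ} (f : Sym2 W → Fin t)
    {φ : W → V} {v : V} (hv : ∀ w, φ w ≠ v) (r : Fin t) :
    preDeg H f φ r v = 0 := by
  unfold preDeg
  convert Set.ncard_empty W
  ext u
  simp only [Set.mem_setOf_eq, Set.mem_empty_iff_false, iff_false, not_exists]
  rintro w ⟨hw, -⟩
  exact hv w hw

lemma Rval_submod {V W : Type*} [Fintype V] [DecidableEq V] [Fintype W] {t : ℕ}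
    (G : Fin t → SimpleGraph V) [∀ i, DecidableRel (G i).Adj]
    (H : SimpleGraph W) (f : Sym2 W → Fin t) (Δ : ℕ) (φ : W → V)
    (X Y : Finset (V × Fin t)) :
    Rval G H f Δ φ (X ∪ Y) + Rval G H f Δ φ (X ∩ Y)
      ≤ Rval G H f Δ φ X + Rval G H f Δ φ Y := by
  classical
  unfold Rval
  have hsum := Finset.sum_union_inter (s₁ := X) (s₂ := Y)
      (f := fun p => ((Δ : ℤ) - (preDeg H f φ p.2 p.1 : ℤ)))
  set A := Finset.image φ Finset.univ with hA
  have hu : famNbhd G (X ∪ Y) \ A = (famNbhd G X \ A) ∪ (famNbhd G Y \ A) := by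
    rw [famNbhd_union, Finset.union_sdiff_distrib]
  have hi : famNbhd G (X ∩ Y) \ A ⊆ (famNbhd G X \ A) ∩ (famNbhd G Y \ A) := by
    intro v hv
    rw [Finset.mem_sdiff] at hv
    rw [Finset.mem_inter, Finset.mem_sdiff, Finset.mem_sdiff]
    exact ⟨⟨famNbhd_mono G Finset.inter_subset_left hv.1, hv.2⟩,
      famNbhd_mono G Finset.inter_subset_right hv.1, hv.2⟩
  have hcard : (famNbhd G (X ∪ Y) \ A).card + (famNbhd G (X ∩ Y) \ A).card
      ≤ (famNbhd G X \ A).card + (famNbhd G Y \ A).card := by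
    calc (famNbhd G (X ∪ Y) \ A).card + (famNbhd G (X ∩ Y) \ A).card
        ≤ ((famNbhd G X \ A) ∪ (famNbhd G Y \ A)).card
            + ((famNbhd G X \ A) ∩ (famNbhd G Y \ A)).card := by
          rw [hu]
          exact Nat.add_le_add_left (Finset.card_le_card hi) _
      _ = _ := Finset.card_union_add_card_inter _ _
  have hcard' : ((famNbhd G (X ∪ Y) \ A).card : ℤ) + ((famNbhd G (X ∩ Y) \ A).card : ℤ)
      ≤ ((famNbhd G X \ A).card : ℤ) + ((famNbhd G Y \ A).card : ℤ) := by
    exact_mod_cast hcard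
  linarith [hsum]

end Aux

/-- **Lemma (single extension step).**
Under the expansion conditions (1) and (2), a `2m`-good embedding of a `[t]`-colored graph
`(H, f)` with at most `k − 1` vertices extends to a `2m`-good embedding of any `[t]`-colored
graph `(H_*, f_*)` obtained by attaching a new leaf, provided the `r`-degrees stay at most `Δ`. -/
theorem single_extension_step {V : Type*} [Fintype V] [DecidableEq V] {Δ m k t : ℕ}
    (hΔ : 0 < Δ) (hm : 0 < m) (hk : 0 < k) (ht : 0 < t)
    (G : Fin t → SimpleGraph V) [∀ i, DecidableRel (G i).Adj]
    (h1 : ∀ X : Finset (V × Fin t), 1 ≤ X.card → X.card ≤ m →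
      Δ * X.card + 1 ≤ (famNbhd G X).card)
    (h2 : ∀ X : Finset (V × Fin t), m < X.card → X.card ≤ 2 * m →
      Δ * X.card + k ≤ (famNbhd G X).card)
    {W : Type*} [Fintype W] (H : SimpleGraph W) (hW : Fintype.card W ≤ k - 1)
    (f : Sym2 W → Fin t)
    (hdeg : ∀ (r : Fin t) (v : W), ({u | H.Adj v u ∧ f s(v, u) = r}).ncard ≤ Δ)
    (φ : W → V) (hemb : IsColEmb G H f φ) (hgood : IsGood G H f Δ φ (2 * m))
    (Hs : SimpleGraph (Option W))
    (hHs : ∀ u v : W, Hs.Adj (some u) (some v) ↔ H.Adj u v)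
    (u₀ : W) (hleaf : ∀ w : W, Hs.Adj none (some w) ↔ w = u₀)
    (fs : Sym2 (Option W) → Fin t)
    (hfs : ∀ u v : W, H.Adj u v → fs s(some u, some v) = f s(u, v))
    (hdegs : ∀ (r : Fin t) (v : Option W),
      ({u | Hs.Adj v u ∧ fs s(v, u) = r}).ncard ≤ Δ) :
    ∃ φs : Option W → V, IsColEmb G Hs fs φs ∧ IsGood G Hs fs Δ φs (2 * m) ∧
      ∀ w : W, φs (some w) = φ w := by
  classical
  obtain ⟨hinj, hadjφ⟩ := hemb
  set r₀ : Fin t := fs s(none, some u₀) with hr₀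
  -- basic facts about Hs edges touching `none`
  have hadj_some_none : ∀ w : W, Hs.Adj (some w) none ↔ w = u₀ := fun w =>
    ⟨fun h => (hleaf w).mp h.symm, fun h => ((hleaf w).mpr h).symm⟩
  have hfs_none : ∀ w : W, fs s(some w, none) = fs s(none, some w) := fun w => by
    rw [Sym2.eq_swap]
  have hmem_some : ∀ (r : Fin t) (w u' : W),
      (some u' ∈ {u : Option W | Hs.Adj (some w) u ∧ fs s(some w, u) = r}) ↔
        u' ∈ {u : W | H.Adj w u ∧ f s(w, u) = r} := by
    intro r w u'
    simp only [Set.mem_setOf_eq, hHs]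
    constructor
    · rintro ⟨h1', h2'⟩
      exact ⟨h1', by rw [← hfs w u' h1']; exact h2'⟩
    · rintro ⟨h1', h2'⟩
      exact ⟨h1', by rw [hfs w u' h1']; exact h2'⟩
  have hnone_img : ∀ S : Set W, (none : Option W) ∉ some '' S := by
    intro S h
    obtain ⟨x, -, hx⟩ := h
    exact Option.some_ne_none x hx
  -- the set of colored neighbours of `some w` in Hs, generic color case
  have hSmain : ∀ (r : Fin t) (w : W), ¬(w = u₀ ∧ r = r₀) →
      {u : Option W | Hs.Adj (some w) u ∧ fs s(some w, u) = r}
        = some '' {u : W | H.Adj w u ∧ f s(w, u) = r} := by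
    intro r w hcase
    ext u
    cases u with
    | none =>
      simp only [Set.mem_setOf_eq]
      constructor
      · rintro ⟨h1', h2'⟩
        have hw := (hadj_some_none w).mp h1'
        subst hw
        exact absurd ⟨rfl, by rw [← h2', hfs_none w, hr₀]⟩ hcase
      · intro h
        exact absurd h (hnone_img _)
    | some u' =>
      rw [hmem_some r w u']
      simp [Set.mem_image]
  have hSu₀ : {u : Option W | Hs.Adj (some u₀) u ∧ fs s(some u₀, u) = r₀}
      = insert none (some '' {u : W | H.Adj u₀ u ∧ f s(u₀, u) = r₀}) := by
    ext u
    cases u with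
    | none =>
      have ha' : Hs.Adj (some u₀) none := (hadj_some_none u₀).mpr rfl
      have hb' : fs s(some u₀, none) = r₀ := by rw [hfs_none u₀, hr₀]
      simp [Set.mem_setOf_eq, Set.mem_insert_iff, ha', hb']
    | some u' =>
      rw [hmem_some r₀ u₀ u']
      simp [Set.mem_insert_iff, Set.mem_image]
  -- D + 1 ≤ Δ where D is the r₀-degree of u₀ in H
  have hDbound : preDeg H f φ r₀ (φ u₀) + 1 ≤ Δ := by
    have h := hdegs r₀ (some u₀)
    rw [hSu₀, Set.ncard_insert_of_notMem (hnone_img _) (Set.toFinite _),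
      Set.ncard_image_of_injective _ (Option.some_injective W)] at h
    rw [preDeg_eq_of_injective H f hinj]
    omega
  -- the "big sets have Rval ≥ 1" lemma
  have hbig : ∀ X : Finset (V × Fin t), m < X.card → X.card ≤ 2 * m →
      1 ≤ Rval G H f Δ φ X := by
    intro X hx1 hx2
    have h2' : ((Δ : ℤ)) * X.card + k ≤ ((famNbhd G X).card : ℤ) := by
      exact_mod_cast h2 X hx1 hx2
    have hAcard : (Finset.image φ Finset.univ).card ≤ k - 1 := by
      refine le_trans (le_trans Finset.card_image_le ?_) hW
      simp
    have hsd : ((famNbhd G X).card : ℤ)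
        ≤ ((famNbhd G X \ Finset.image φ Finset.univ).card : ℤ)
          + ((Finset.image φ Finset.univ).card : ℤ) := by
      exact_mod_cast Finset.card_le_card_sdiff_add_card
    have hAcard' : ((Finset.image φ Finset.univ).card : ℤ) ≤ (k : ℤ) - 1 := by
      omega
    have hsum : ∑ p ∈ X, ((Δ : ℤ) - (preDeg H f φ p.2 p.1 : ℤ)) ≤ (Δ : ℤ) * X.card := by
      calc ∑ p ∈ X, ((Δ : ℤ) - (preDeg H f φ p.2 p.1 : ℤ))
          ≤ ∑ _p ∈ X, (Δ : ℤ) := by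
            refine Finset.sum_le_sum fun p _ => ?_
            have : (0 : ℤ) ≤ (preDeg H f φ p.2 p.1 : ℤ) := Int.natCast_nonneg _
            linarith
        _ = (Δ : ℤ) * X.card := by
            rw [Finset.sum_const, nsmul_eq_mul]; ring
    unfold Rval
    linarith
  -- tight sets
  set P : Finset (V × Fin t) → Prop :=
    fun X => X.card ≤ m ∧ Rval G H f Δ φ X ≤ 0 ∧ (φ u₀, r₀) ∉ X with hP
  have hRempty : Rval G H f Δ φ ∅ = 0 := by
    simp [Rval, famNbhd]
  have hP0 : P ∅ := by
    refine ⟨by simp, by rw [hRempty], by simp⟩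
  have hPunion : ∀ X, P X → ∀ Y, P Y → P (X ∪ Y) := by
    intro X hX Y hY
    obtain ⟨hXm, hXR, hXmem⟩ := hX
    obtain ⟨hYm, hYR, hYmem⟩ := hY
    have hcardU : (X ∪ Y).card ≤ 2 * m := by
      have := Finset.card_union_le X Y
      omega
    have hinter : 0 ≤ Rval G H f Δ φ (X ∩ Y) := by
      refine hgood _ ?_
      have : (X ∩ Y).card ≤ X.card := Finset.card_le_card Finset.inter_subset_left
      omega
    have hRU : Rval G H f Δ φ (X ∪ Y) ≤ 0 := by
      have := Rval_submod G H f Δ φ X Y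
      linarith
    have hcardm : (X ∪ Y).card ≤ m := by
      by_contra hgt
      push_neg at hgt
      have := hbig (X ∪ Y) hgt hcardU
      linarith
    refine ⟨hcardm, hRU, ?_⟩
    rw [Finset.mem_union]
    rintro (h | h)
    · exact hXmem h
    · exact hYmem h
  -- the union of all tight sets
  set T : Finset (V × Fin t) := (Finset.univ.filter P).sup id with hTdef
  have hT : P T := by
    refine Finset.sup_induction hP0 (fun a ha b hb => hPunion a ha b hb) ?_
    intro X hX
    exact (Finset.mem_filter.mp hX).2
  have hsubT : ∀ X, P X → X ⊆ T := by
    intro X hX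
    exact Finset.le_sup (f := id) (Finset.mem_filter.mpr ⟨Finset.mem_univ X, hX⟩)
  -- finding a good vertex y
  have hy : ∃ y ∈ (G r₀).neighborFinset (φ u₀) \ Finset.image φ Finset.univ,
      ∀ X, P X → y ∉ famNbhd G X := by
    by_contra hcon
    push_neg at hcon
    have hCT : ∀ y ∈ (G r₀).neighborFinset (φ u₀) \ Finset.image φ Finset.univ,
        y ∈ famNbhd G T := by
      intro y hyC
      obtain ⟨X, hPX, hyX⟩ := hcon y hyC
      exact famNbhd_mono G (hsubT X hPX) hyX
    set T' : Finset (V × Fin t) := insert (φ u₀, r₀) T with hT'def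
    have hcardT' : T'.card ≤ 2 * m := by
      have h' : T'.card ≤ T.card + 1 := by
        rw [hT'def]
        exact Finset.card_insert_le _ _
      have := hT.1
      omega
    have h0 := hgood T' hcardT'
    have hNT' : famNbhd G T' \ Finset.image φ Finset.univ
        = famNbhd G T \ Finset.image φ Finset.univ := by
      have hT'eq : famNbhd G T' = (G r₀).neighborFinset (φ u₀) ∪ famNbhd G T := by
        rw [hT'def, Finset.insert_eq, famNbhd_union]
        congr 1
        simp [famNbhd]
      rw [hT'eq, Finset.union_sdiff_distrib]
      rw [Finset.union_eq_right]
      intro v hv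
      rw [Finset.mem_sdiff] at hv ⊢
      exact ⟨hCT v (Finset.mem_sdiff.mpr hv), hv.2⟩
    have hsumT' : ∑ p ∈ T', ((Δ : ℤ) - (preDeg H f φ p.2 p.1 : ℤ))
        = ((Δ : ℤ) - (preDeg H f φ r₀ (φ u₀) : ℤ))
          + ∑ p ∈ T, ((Δ : ℤ) - (preDeg H f φ p.2 p.1 : ℤ)) := by
      rw [hT'def, Finset.sum_insert hT.2.2]
    have hRT := hT.2.1
    have hDb : (preDeg H f φ r₀ (φ u₀) : ℤ) + 1 ≤ (Δ : ℤ) := by exact_mod_cast hDbound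
    unfold Rval at h0 hRT
    rw [hNT', hsumT'] at h0
    linarith
  obtain ⟨y, hyC, hyavoid⟩ := hy
  rw [Finset.mem_sdiff] at hyC
  obtain ⟨hyN₀, hyA⟩ := hyC
  have hyA' : ∀ w : W, φ w ≠ y := by
    intro w h
    exact hyA (Finset.mem_image.mpr ⟨w, Finset.mem_univ w, h⟩)
  -- the extended embedding
  set φs : Option W → V := fun o => o.elim y φ with hφs
  have hφs_some : ∀ w : W, φs (some w) = φ w := fun w => rfl
  have hφs_none : φs none = y := rfl
  -- injectivity
  have hφsinj : Function.Injective φs := by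
    intro a b hab
    cases a with
    | none =>
      cases b with
      | none => rfl
      | some w => exact absurd hab.symm (hyA' w)
    | some w =>
      cases b with
      | none => exact absurd hab (hyA' w)
      | some w' => rw [hinj hab]
  -- adjacency
  have hφsadj : ∀ u v : Option W, Hs.Adj u v → (G (fs s(u, v))).Adj (φs u) (φs v) := by
    intro u v huv
    cases u with
    | none =>
      cases v with
      | none => exact absurd huv (Hs.loopless.irrefl none)
      | some w =>
        have hw := (hleaf w).mp huv
        rw [hw, hφs_none, hφs_some, ← hr₀]
        exact (((G r₀).mem_neighborFinset (φ u₀) y).mp hyN₀).symm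
    | some w =>
      cases v with
      | none =>
        have hw := (hadj_some_none w).mp huv
        rw [hw, hφs_none, hφs_some, hfs_none u₀, ← hr₀]
        exact ((G r₀).mem_neighborFinset (φ u₀) y).mp hyN₀
      | some w' =>
        have hH := (hHs w w').mp huv
        rw [hφs_some, hφs_some, hfs w w' hH]
        exact hadjφ w w' hH
  -- pointwise preDeg formula for the extension
  have hpre : ∀ (r : Fin t) (v : V),
      (preDeg Hs fs φs r v : ℤ) = (preDeg H f φ r v : ℤ)
        + (if (v, r) = (φ u₀, r₀) then 1 else 0)
        + (if (v, r) = (y, r₀) then 1 else 0) := by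
    intro r v
    by_cases hvy : v = y
    · rw [hvy]
      have hold : preDeg H f φ r y = 0 := preDeg_eq_zero H f hyA' r
      have hif1 : (y, r) ≠ (φ u₀, r₀) := fun h => hyA' u₀ (congrArg Prod.fst h).symm
      have hsety : {u : Option W | ∃ w', φs w' = y ∧ Hs.Adj w' u ∧ fs s(w', u) = r}
          = {u : Option W | Hs.Adj none u ∧ fs s(none, u) = r} := by
        ext u
        simp only [Set.mem_setOf_eq]
        constructor
        · rintro ⟨w', hw', h1', h2'⟩
          cases w' with
          | none => exact ⟨h1', h2'⟩
          | some w'' => exact absurd hw' (hyA' w'')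
        · intro h
          exact ⟨none, rfl, h⟩
      by_cases hrr : r = r₀
      · have hset : {u : Option W | Hs.Adj none u ∧ fs s(none, u) = r}
            = {some u₀} := by
          ext u
          cases u with
          | none =>
            simp only [Set.mem_setOf_eq, Set.mem_singleton_iff]
            constructor
            · rintro ⟨h1', -⟩; exact absurd h1' (Hs.loopless.irrefl none)
            · intro h; exact absurd h (by simp)
          | some u' =>
            simp only [Set.mem_setOf_eq, Set.mem_singleton_iff, hleaf u', Option.some_inj]
            constructor
            · rintro ⟨h1', -⟩; exact h1'
            · rintro h
              exact ⟨h, by rw [h, hrr, hr₀]⟩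
        have hnew : preDeg Hs fs φs r y = 1 := by
          unfold preDeg
          rw [hsety, hset, Set.ncard_singleton]
        have hif2 : (y, r) = (y, r₀) := by rw [hrr]
        rw [hnew, hold, if_neg hif1, if_pos hif2]
        norm_num
      · have hset : {u : Option W | Hs.Adj none u ∧ fs s(none, u) = r}
            = (∅ : Set (Option W)) := by
          ext u
          cases u with
          | none =>
            simp only [Set.mem_setOf_eq, Set.mem_empty_iff_false, iff_false]
            rintro ⟨h1', -⟩; exact absurd h1' (Hs.loopless.irrefl none)
          | some u' =>
            simp only [Set.mem_setOf_eq, Set.mem_empty_iff_false, iff_false, hleaf u']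
            rintro ⟨h1', h2'⟩
            subst h1'
            exact hrr (by rw [← h2', hr₀])
        have hnew : preDeg Hs fs φs r y = 0 := by
          unfold preDeg
          rw [hsety, hset, Set.ncard_empty]
        have hif2 : (y, r) ≠ (y, r₀) := fun h => hrr (congrArg Prod.snd h)
        rw [hnew, hold, if_neg hif1, if_neg hif2]
        norm_num
    · by_cases hvim : ∃ w, φ w = v
      · obtain ⟨w, rfl⟩ := hvim
        have hsetw : {u : Option W | ∃ w', φs w' = φ w ∧ Hs.Adj w' u ∧ fs s(w', u) = r}
            = {u : Option W | Hs.Adj (some w) u ∧ fs s(some w, u) = r} := by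
          ext u
          simp only [Set.mem_setOf_eq]
          constructor
          · rintro ⟨w', hw', h1', h2'⟩
            cases w' with
            | none => exact absurd hw'.symm hvy
            | some w'' =>
              cases hinj hw'
              exact ⟨h1', h2'⟩
          · intro h
            exact ⟨some w, rfl, h⟩
        have hnew_eq : preDeg Hs fs φs r (φ w)
            = ({u : Option W | Hs.Adj (some w) u ∧ fs s(some w, u) = r}).ncard := by
          unfold preDeg
          rw [hsetw]
        have hold_eq := preDeg_eq_of_injective H f hinj r w
        have hif2 : (φ w, r) ≠ (y, r₀) := fun h => hyA' w (congrArg Prod.fst h)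
        by_cases hcase : w = u₀ ∧ r = r₀
        · have hif1 : (φ w, r) = (φ u₀, r₀) := by rw [hcase.1, hcase.2]
          have hset2 : {u : Option W | Hs.Adj (some w) u ∧ fs s(some w, u) = r}
              = insert none (some '' {u : W | H.Adj w u ∧ f s(w, u) = r}) := by
            rw [hcase.1, hcase.2]
            exact hSu₀
          rw [hnew_eq, hset2,
            Set.ncard_insert_of_notMem (hnone_img _) (Set.toFinite _),
            Set.ncard_image_of_injective _ (Option.some_injective W),
            hold_eq, if_pos hif1, if_neg hif2]
          push_cast
          ring
        · have hif1 : (φ w, r) ≠ (φ u₀, r₀) := by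
            intro h
            exact hcase ⟨hinj (congrArg Prod.fst h), congrArg Prod.snd h⟩
          rw [hnew_eq, hSmain r w hcase,
            Set.ncard_image_of_injective _ (Option.some_injective W),
            hold_eq, if_neg hif1, if_neg hif2]
          norm_num
      · push_neg at hvim
        have hold : preDeg H f φ r v = 0 := preDeg_eq_zero H f hvim r
        have hnew : preDeg Hs fs φs r v = 0 := by
          unfold preDeg
          convert Set.ncard_empty (Option W)
          ext u
          simp only [Set.mem_setOf_eq, Set.mem_empty_iff_false, iff_false, not_exists]
          rintro w' ⟨hw', -⟩
          cases w' with
          | none => exact hvy hw'.symm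
          | some w'' => exact hvim w'' hw'
        have hif1 : (v, r) ≠ (φ u₀, r₀) := fun h => hvim u₀ (congrArg Prod.fst h).symm
        have hif2 : (v, r) ≠ (y, r₀) := fun h => hvy (congrArg Prod.fst h)
        rw [hnew, hold, if_neg hif1, if_neg hif2]
        norm_num
  -- image of the extension
  have hAs : Finset.image φs Finset.univ = insert y (Finset.image φ Finset.univ) := by
    ext z
    simp only [Finset.mem_image, Finset.mem_insert, Finset.mem_univ, true_and]
    constructor
    · rintro ⟨o, ho⟩
      cases o with
      | none => exact Or.inl ho.symm
      | some w => exact Or.inr ⟨w, ho⟩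
    · rintro (h | ⟨w, hw⟩)
      · exact ⟨none, h.symm⟩
      · exact ⟨some w, hw⟩
  -- the Rval difference formula
  have hdiff : ∀ X : Finset (V × Fin t),
      Rval G Hs fs Δ φs X = Rval G H f Δ φ X
        - (if y ∈ famNbhd G X then 1 else 0)
        + (if (φ u₀, r₀) ∈ X then 1 else 0)
        + (if (y, r₀) ∈ X then 1 else 0) := by
    intro X
    have hsum : ∑ p ∈ X, ((Δ : ℤ) - (preDeg Hs fs φs p.2 p.1 : ℤ))
        = ∑ p ∈ X, ((Δ : ℤ) - (preDeg H f φ p.2 p.1 : ℤ))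
          - (if (φ u₀, r₀) ∈ X then 1 else 0)
          - (if (y, r₀) ∈ X then 1 else 0) := by
      have hpt : ∀ p ∈ X, ((Δ : ℤ) - (preDeg Hs fs φs p.2 p.1 : ℤ))
          = ((Δ : ℤ) - (preDeg H f φ p.2 p.1 : ℤ))
            - (if p = (φ u₀, r₀) then 1 else 0)
            - (if p = (y, r₀) then 1 else 0) := by
        intro p _
        have h := hpre p.2 p.1
        rw [Prod.mk.eta] at h
        linarith [h]
      rw [Finset.sum_congr rfl hpt, Finset.sum_sub_distrib, Finset.sum_sub_distrib,
        Finset.sum_ite_eq' X (φ u₀, r₀) (fun _ => (1 : ℤ)),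
        Finset.sum_ite_eq' X (y, r₀) (fun _ => (1 : ℤ))]
    have hcard : ((famNbhd G X \ Finset.image φs Finset.univ).card : ℤ)
        = ((famNbhd G X \ Finset.image φ Finset.univ).card : ℤ)
          - (if y ∈ famNbhd G X then 1 else 0) := by
      rw [hAs, Finset.sdiff_insert]
      by_cases hy2 : y ∈ famNbhd G X \ Finset.image φ Finset.univ
      · rw [Finset.card_erase_of_mem hy2,
          if_pos ((Finset.mem_sdiff.mp hy2).1)]
        have h1' : 1 ≤ (famNbhd G X \ Finset.image φ Finset.univ).card :=
          Finset.card_pos.mpr ⟨y, hy2⟩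
        rw [Nat.cast_sub h1']
        norm_num
      · rw [Finset.erase_eq_of_notMem hy2]
        have hyn : y ∉ famNbhd G X := fun h =>
          hy2 (Finset.mem_sdiff.mpr ⟨h, hyA⟩)
        rw [if_neg hyn]
        ring
    unfold Rval
    rw [hcard, hsum]
    ring
  -- goodness of the extension
  have hgoods : IsGood G Hs fs Δ φs (2 * m) := by
    intro X hX
    rw [hdiff X]
    have e1 : (if y ∈ famNbhd G X then (1 : ℤ) else 0) ≤ 1 := by
      split <;> norm_num
    have e1' : (0 : ℤ) ≤ if y ∈ famNbhd G X then (1 : ℤ) else 0 := by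
      split <;> norm_num
    have e2 : (0 : ℤ) ≤ if (φ u₀, r₀) ∈ X then (1 : ℤ) else 0 := by
      split <;> norm_num
    have e3 : (0 : ℤ) ≤ if (y, r₀) ∈ X then (1 : ℤ) else 0 := by
      split <;> norm_num
    by_cases hXm : X.card ≤ m
    · by_cases hmem : (φ u₀, r₀) ∈ X
      · have h0 := hgood X hX
        rw [if_pos hmem]
        linarith
      · by_cases hR : Rval G H f Δ φ X ≤ 0
        · have hPX : P X := ⟨hXm, hR, hmem⟩
          have hyn := hyavoid X hPX
          rw [if_neg hyn, if_neg hmem]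
          have h0 := hgood X hX
          linarith
        · push_neg at hR
          have h1' : (1 : ℤ) ≤ Rval G H f Δ φ X := hR
          linarith
    · push_neg at hXm
      have := hbig X hXm hX
      linarith
  exact ⟨φs, ⟨hφsinj, hφsadj⟩, hgoods, hφs_some⟩
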